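/- In \mathbb{Q}[[z]], let g_0, g_\beta, g_1, g_2, ... satisfy g_0 = 1 + z g_\beta + (1/3) z g_2, g_\beta = (1/3) z g_1, g_1 = z g_0 + (1/3) z g_3, and g_i = (2/3) z g_{i-1} + (1/3) z g_{i+2} for i \ge 2 (coefficients bounded probabilities). Then G(u) = \sum_{i\ge0} u^i g_i satisfies, with V = uz, the identity G(u) * (2V^3 - 3V^2 + z^3) = -V^3 g_0 - 3V^2 - g_1 V^2 z^2 + z^3 g_0 + g_1 V z^2. -/

import Mathlib

open PowerSeries

/-- Dual Knödel model: if `g₀, g_β, g₁, g₂, …` in `ℚ⟦z⟧` satisfy the recursions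
`g₀ = 1 + z g_β + (1/3)z g₂`, `g_β = (1/3)z g₁`, `g₁ = z g₀ + (1/3)z g₃`,
`gᵢ = (2/3)z g_{i-1} + (1/3)z g_{i+2}` for `i ≥ 2` (with coefficients in `[0,1]`), then
`G(u) = ∑_{i≥0} uⁱ gᵢ` satisfies, with `V = uz`,
`G(u)(2V³ - 3V² + z³) = -V³ g₀ - 3V² - g₁V²z² + z³ g₀ + g₁Vz²`. -/
theorem knodel_dual_model_kernel_equation
    (g : ℕ → PowerSeries ℚ) (gβ : PowerSeries ℚ)
    (hbound : ∀ i n, 0 ≤ PowerSeries.coeff n (g i) ∧ PowerSeries.coeff n (g i) ≤ 1)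
    (hboundβ : ∀ n, 0 ≤ PowerSeries.coeff n gβ ∧ PowerSeries.coeff n gβ ≤ 1)
    (hg0 : g 0 = 1 + PowerSeries.X * gβ + PowerSeries.C (1 / 3 : ℚ) * PowerSeries.X * g 2)
    (hgβ : gβ = PowerSeries.C (1 / 3 : ℚ) * PowerSeries.X * g 1)
    (hg1 : g 1 = PowerSeries.X * g 0 + PowerSeries.C (1 / 3 : ℚ) * PowerSeries.X * g 3)
    (hgi : ∀ i, 2 ≤ i →
      g i = PowerSeries.C (2 / 3 : ℚ) * PowerSeries.X * g (i - 1) +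
            PowerSeries.C (1 / 3 : ℚ) * PowerSeries.X * g (i + 2)) :
    let R := PowerSeries ℚ
    let u : PowerSeries R := PowerSeries.X
    let z : PowerSeries R := PowerSeries.C (PowerSeries.X : R)
    let V : PowerSeries R := u * z
    let G : PowerSeries R := PowerSeries.mk fun i => g i
    G * (2 * V ^ 3 - 3 * V ^ 2 + z ^ 3) =
      -V ^ 3 * PowerSeries.C (g 0) - 3 * V ^ 2 -
        PowerSeries.C (g 1) * V ^ 2 * z ^ 2 +
        z ^ 3 * PowerSeries.C (g 0) + PowerSeries.C (g 1) * V * z ^ 2 := by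
  have f1 : (3 : ℚ⟦X⟧) * PowerSeries.C (R := ℚ) (2/3) = 2 := by
    rw [show (3:ℚ⟦X⟧) = PowerSeries.C (R := ℚ) 3 from (map_ofNat (PowerSeries.C (R := ℚ)) 3).symm,
      ← map_mul]
    norm_num [map_ofNat]
  have f2 : (3 : ℚ⟦X⟧) * PowerSeries.C (R := ℚ) (1/3) = 1 := by
    rw [show (3:ℚ⟦X⟧) = PowerSeries.C (R := ℚ) 3 from (map_ofNat (PowerSeries.C (R := ℚ)) 3).symm,
      ← map_mul]
    norm_num
  have H0 : 3 * g 0 = 3 + PowerSeries.X ^ 2 * g 1 + PowerSeries.X * g 2 := by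
    linear_combination 3 * hg0 + 3 * PowerSeries.X * hgβ +
      (PowerSeries.X ^ 2 * g 1) * f2 + (PowerSeries.X * g 2) * f2
  have H1 : 3 * g 1 = 3 * PowerSeries.X * g 0 + PowerSeries.X * g 3 := by
    linear_combination 3 * hg1 + (PowerSeries.X * g 3) * f2
  have Hi : ∀ i, 2 ≤ i →
      3 * g i = 2 * PowerSeries.X * g (i - 1) + PowerSeries.X * g (i + 2) := by
    intro i hi
    linear_combination 3 * (hgi i hi) + (PowerSeries.X * g (i - 1)) * f1 +
      (PowerSeries.X * g (i + 2)) * f2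
  intro R u z V G
  apply PowerSeries.ext
  intro n
  have e1 : G * (2 * V ^ 3 - 3 * V ^ 2 + z ^ 3) =
      (PowerSeries.X : PowerSeries R) ^ 3 *
        (PowerSeries.C (R := R) ((2 : ℚ⟦X⟧) * PowerSeries.X ^ 3) * (PowerSeries.mk fun i => g i)) -
      (PowerSeries.X : PowerSeries R) ^ 2 *
        (PowerSeries.C (R := R) ((3 : ℚ⟦X⟧) * PowerSeries.X ^ 2) * (PowerSeries.mk fun i => g i)) +
      PowerSeries.C (R := R) (PowerSeries.X ^ 3) * PowerSeries.mk (fun i => g i) := by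
    show G * (2 * V ^ 3 - 3 * V ^ 2 + z ^ 3) = _
    simp only [V, z, u, G, map_mul, map_pow, map_ofNat]
    ring
  have e2 : -V ^ 3 * PowerSeries.C (R := R) (g 0) - 3 * V ^ 2 -
      PowerSeries.C (R := R) (g 1) * V ^ 2 * z ^ 2 +
      z ^ 3 * PowerSeries.C (R := R) (g 0) + PowerSeries.C (R := R) (g 1) * V * z ^ 2 =
      -((PowerSeries.X : PowerSeries R) ^ 3 *
          PowerSeries.C (R := R) (PowerSeries.X ^ 3 * g 0)) -
      (PowerSeries.X : PowerSeries R) ^ 2 *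
        PowerSeries.C (R := R) ((3 : ℚ⟦X⟧) * PowerSeries.X ^ 2) -
      (PowerSeries.X : PowerSeries R) ^ 2 *
        PowerSeries.C (R := R) (PowerSeries.X ^ 4 * g 1) +
      PowerSeries.C (R := R) (PowerSeries.X ^ 3 * g 0) +
      (PowerSeries.X : PowerSeries R) ^ 1 *
        PowerSeries.C (R := R) (PowerSeries.X ^ 3 * g 1) := by
    simp only [V, z, u, map_mul, map_pow, map_ofNat]
    ring
  rw [e1, e2]
  simp only [map_sub, map_add, map_neg, coeff_X_pow_mul', coeff_C_mul, coeff_mk, coeff_C]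
  rcases n with _|_|_|_|n
  · norm_num [constantCoeff_mk]
  · norm_num
  · norm_num
    linear_combination (-(PowerSeries.X : ℚ⟦X⟧) ^ 2) * H0
  · norm_num
    linear_combination (-(PowerSeries.X : ℚ⟦X⟧) ^ 2) * H1
  · have h := Hi (n + 2) (by omega)
    rw [show n + 2 - 1 = n + 1 from rfl] at h
    simp only [show n + 1 + 1 + 1 + 1 - 2 = n + 2 from rfl,
      show n + 1 + 1 + 1 + 1 - 3 = n + 1 from rfl,
      show n + 1 + 1 + 1 + 1 = n + 4 from rfl]
    norm_num
    linear_combination (-(PowerSeries.X : ℚ⟦X⟧) ^ 2) * h
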